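/- For 0<a<1, k∈(0,1), and s∈(0,1), the equation g(x) = (s/(1-s))(1-k) with g(x) = ((1-x)/x)^{a-1}(x + (1-k)^2(1-x))^a has exactly one solution x* in (0,1). (In particular g is continuous and strictly monotonically increasing on (0,1).) -/

import Mathlib

open Real Set Filter Topology

noncomputable def g (a k x : ℝ) : ℝ :=
  ((1 - x) / x) ^ (a - 1) * (x + (1 - k) ^ 2 * (1 - x)) ^ a

theorem stmt_8 (a k s : ℝ) (ha0 : 0 < a) (ha1 : a < 1)
    (hk : k ∈ Ioo (0:ℝ) 1) (hs : s ∈ Ioo (0:ℝ) 1) :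
    (∃! x, x ∈ Ioo (0:ℝ) 1 ∧ g a k x = s / (1 - s) * (1 - k)) ∧
    ContinuousOn (g a k) (Ioo 0 1) ∧ StrictMonoOn (g a k) (Ioo 0 1) := by
  obtain ⟨hk0, hk1⟩ := hk
  obtain ⟨hs0, hs1⟩ := hs
  have hkk : (0:ℝ) < (1 - k) ^ 2 := by nlinarith
  have hkk1 : (1 - k) ^ 2 < 1 := by nlinarith
  have hb2 : ∀ x ∈ Ioo (0:ℝ) 1, 0 < x + (1 - k) ^ 2 * (1 - x) := by
    intro x hx; nlinarith [hx.1, hx.2]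
  have hb1 : ∀ x ∈ Ioo (0:ℝ) 1, 0 < (1 - x) / x := by
    intro x hx; exact div_pos (by linarith [hx.2]) hx.1
  -- continuity
  have hcont : ContinuousOn (g a k) (Ioo 0 1) := by
    apply ContinuousOn.mul
    · apply ContinuousOn.rpow_const
      · exact (continuousOn_const.sub continuousOn_id).div continuousOn_id
          (fun x hx => ne_of_gt hx.1)
      · exact fun x hx => Or.inl (ne_of_gt (hb1 x hx))
    · apply ContinuousOn.rpow_const
      · fun_prop
      · exact fun x hx => Or.inl (ne_of_gt (hb2 x hx))
  -- strict monotonicity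
  have hmono : StrictMonoOn (g a k) (Ioo 0 1) := by
    intro x hx y hy hxy
    have h1 : ((1 - x) / x) ^ (a - 1) < ((1 - y) / y) ^ (a - 1) := by
      apply Real.rpow_lt_rpow_of_neg (hb1 y hy) _ (by linarith)
      rw [div_lt_div_iff₀ hy.1 hx.1]; nlinarith [hx.1, hy.1]
    have h2 : (x + (1 - k) ^ 2 * (1 - x)) ^ a < (y + (1 - k) ^ 2 * (1 - y)) ^ a := by
      apply Real.rpow_lt_rpow (le_of_lt (hb2 x hx)) _ ha0
      nlinarith
    exact mul_lt_mul'' h1 h2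
      (le_of_lt (Real.rpow_pos_of_pos (hb1 x hx) _))
      (le_of_lt (Real.rpow_pos_of_pos (hb2 x hx) _))
  -- target positive
  set t : ℝ := s / (1 - s) * (1 - k) with ht
  have ht0 : 0 < t := by
    apply mul_pos (div_pos hs0 (by linarith)) (by linarith)
  -- limit at 0
  have hlim0 : Tendsto (g a k) (𝓝[>] (0:ℝ)) (𝓝 0) := by
    have hA : Tendsto (fun x : ℝ => (1 - x) / x) (𝓝[>] 0) atTop := by
      have : Tendsto (fun x : ℝ => x⁻¹ - 1) (𝓝[>] (0:ℝ)) atTop :=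
        tendsto_atTop_add_const_right _ (-1) tendsto_inv_nhdsGT_zero
      refine this.congr' ?_
      filter_upwards [self_mem_nhdsWithin] with x hx
      rw [sub_div, div_self (ne_of_gt (mem_Ioi.mp hx)), one_div]
    have hB : Tendsto (fun u : ℝ => u ^ (a - 1)) atTop (𝓝 0) := by
      have := tendsto_rpow_neg_atTop (by linarith : (0:ℝ) < 1 - a)
      simpa [neg_sub] using this
    have hC : Tendsto (fun x : ℝ => ((1 - x) / x) ^ (a - 1)) (𝓝[>] 0) (𝓝 0) :=
      hB.comp hA
    have hD : Tendsto (fun x : ℝ => (x + (1 - k) ^ 2 * (1 - x)) ^ a) (𝓝[>] 0)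
        (𝓝 ((((1:ℝ) - k) ^ 2) ^ a)) := by
      have hc : ContinuousAt (fun x : ℝ => (x + (1 - k) ^ 2 * (1 - x)) ^ a) 0 := by
        apply ContinuousAt.rpow_const (by fun_prop)
        left; simpa using ne_of_gt hkk
      have := hc.tendsto.mono_left (nhdsWithin_le_nhds (s := Ioi (0:ℝ)))
      simpa using this
    have := hC.mul hD
    rw [zero_mul] at this; exact this
  -- limit at 1
  have hlim1 : Tendsto (g a k) (𝓝[<] (1:ℝ)) atTop := by
    have hA : Tendsto (fun x : ℝ => (1 - x) / x) (𝓝[<] 1) (𝓝[>] 0) := by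
      rw [tendsto_nhdsWithin_iff]
      constructor
      · have hc : ContinuousAt (fun x : ℝ => (1 - x) / x) 1 := by
          fun_prop (disch := norm_num)
        have := hc.tendsto.mono_left (nhdsWithin_le_nhds (s := Iio (1:ℝ)))
        simpa using this
      · filter_upwards [Ioo_mem_nhdsLT_of_mem
          (⟨by norm_num, le_refl (1:ℝ)⟩ : (1:ℝ) ∈ Ioc (1/2 : ℝ) 1)] with x hx
        exact hb1 x ⟨by linarith [hx.1], hx.2⟩
    have hB : Tendsto (fun u : ℝ => u ^ (a - 1)) (𝓝[>] (0:ℝ)) atTop := by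
      have h1 : Tendsto (fun u : ℝ => u ^ (1 - a)) (𝓝[>] (0:ℝ)) (𝓝[>] 0) := by
        rw [tendsto_nhdsWithin_iff]
        constructor
        · have hc : ContinuousAt (fun u : ℝ => u ^ (1 - a)) 0 :=
            Real.continuousAt_rpow_const 0 (1 - a) (Or.inr (by linarith))
          have := hc.tendsto.mono_left (nhdsWithin_le_nhds (s := Ioi (0:ℝ)))
          simpa [Real.zero_rpow (by linarith : (1:ℝ) - a ≠ 0)] using this
        · filter_upwards [self_mem_nhdsWithin] with u hu
          exact Real.rpow_pos_of_pos hu _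
      have := tendsto_inv_nhdsGT_zero.comp h1
      refine this.congr' ?_
      filter_upwards [self_mem_nhdsWithin] with u hu
      rw [Function.comp_apply, ← Real.rpow_neg (le_of_lt hu), neg_sub]
    have hC : Tendsto (fun x : ℝ => ((1 - x) / x) ^ (a - 1)) (𝓝[<] 1) atTop :=
      hB.comp hA
    have hD : Tendsto (fun x : ℝ => (x + (1 - k) ^ 2 * (1 - x)) ^ a) (𝓝[<] 1) (𝓝 1) := by
      have hc : ContinuousAt (fun x : ℝ => (x + (1 - k) ^ 2 * (1 - x)) ^ a) 1 := by
        apply ContinuousAt.rpow_const (by fun_prop)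
        left; norm_num
      have := hc.tendsto.mono_left (nhdsWithin_le_nhds (s := Iio (1:ℝ)))
      simpa using this
    exact Filter.Tendsto.atTop_mul_pos one_pos hC hD
  -- pick points
  have hev0 : ∃ x, (g a k x < t ∧ x ∈ Ioo (0:ℝ) (1/2)) := by
    have h1 := hlim0.eventually_lt_const ht0
    have h2 : Ioo (0:ℝ) (1/2) ∈ 𝓝[>] (0:ℝ) :=
      Ioo_mem_nhdsGT_of_mem ⟨le_refl (0:ℝ), by norm_num⟩
    exact (h1.and h2).exists
  have hev1 : ∃ x, (t < g a k x ∧ x ∈ Ioo (1/2 : ℝ) 1) := by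
    have h1 := hlim1.eventually_gt_atTop t
    have h2 : Ioo (1/2 : ℝ) 1 ∈ 𝓝[<] (1:ℝ) :=
      Ioo_mem_nhdsLT_of_mem ⟨by norm_num, le_refl (1:ℝ)⟩
    exact (h1.and h2).exists
  obtain ⟨x₀, hx₀t, hx₀m⟩ := hev0
  obtain ⟨x₁, hx₁t, hx₁m⟩ := hev1
  have hx01 : x₀ ≤ x₁ := le_of_lt (lt_trans hx₀m.2 hx₁m.1)
  have hsub : Icc x₀ x₁ ⊆ Ioo (0:ℝ) 1 := fun z hz =>
    ⟨lt_of_lt_of_le hx₀m.1 hz.1, lt_of_le_of_lt hz.2 hx₁m.2⟩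
  obtain ⟨c, hc, hgc⟩ := intermediate_value_Icc hx01 (hcont.mono hsub)
    ⟨le_of_lt hx₀t, le_of_lt hx₁t⟩
  refine ⟨⟨c, ⟨hsub hc, hgc⟩, ?_⟩, hcont, hmono⟩
  intro y hy
  exact hmono.injOn hy.1 (hsub hc) (by rw [hy.2, hgc])
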